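/- Let a ≠ b be positive integers, let (sₖ) define the Sturmian words m_k as usual, and let α_k = [0; m_k, m_k, ...] be the quadratic real number whose continued fraction expansion is purely periodic with period the letters of m_k. Then H(α_k) ≫≪ X_k, where X_k = H(M_k) is the height of the matrix associated to m_k, and moreover the leading coefficient of the minimal polynomial of α_k over ℤ is ≫ X_k, and the Galois conjugate α'_k of α_k satisfies |α'_k - α_k| ≫ 1, with implied constants depending only on a, b and (sₖ). -/

import Mathlib

open Polynomial

/-- The height of an integer polynomial: the maximum of the absolute values of
its coefficients. -/
def polyHeight (P : Polynomial ℤ) : ℕ :=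
  P.support.sup fun i => (P.coeff i).natAbs

/-- The height of a real algebraic number: the height of its minimal polynomial
over `ℤ`. -/
noncomputable def algHeight (α : ℝ) : ℕ :=
  sInf {h : ℕ | ∃ P : Polynomial ℤ, P ≠ 0 ∧ Polynomial.aeval α P = 0 ∧
    P.natDegree = (minpoly ℚ α).natDegree ∧ polyHeight P = h}

/-- The matrix associated to a word over distinct positive integers. -/
def wordMatrix (m : List ℤ) : Matrix (Fin 2) (Fin 2) ℤ :=
  (m.map fun ℓ => !![ℓ, 1; 1, 0]).prod

/-- The height of a `2×2` integer matrix. -/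
def matHeightZ (M : Matrix (Fin 2) (Fin 2) ℤ) : ℕ :=
  max (max (M 0 0).natAbs (M 0 1).natAbs) (max (M 1 0).natAbs (M 1 1).natAbs)

/-- `α` is the number `[0; m, m, m, ...]` whose continued fraction is purely
periodic with period the word associated to the matrix `M = (q_N q_{N-1}; p_N p_{N-1})`:
it lies in `(0,1)` and is fixed by the associated homography. -/
def IsPurelyPeriodicPt (α : ℝ) (M : Matrix (Fin 2) (Fin 2) ℤ) : Prop :=
  0 < α ∧ α < 1 ∧
    α * ((M 0 0 : ℝ) + (M 0 1 : ℝ) * α) = (M 1 0 : ℝ) + (M 1 1 : ℝ) * α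

namespace Stmt14Aux

abbrev N (ℓ : ℤ) : Matrix (Fin 2) (Fin 2) ℤ := !![ℓ, 1; 1, 0]

lemma wm_nil : wordMatrix [] = 1 := rfl

lemma wm_cons (ℓ : ℤ) (w : List ℤ) : wordMatrix (ℓ :: w) = N ℓ * wordMatrix w := by
  simp [wordMatrix]

lemma wm_singleton (ℓ : ℤ) : wordMatrix [ℓ] = N ℓ := by
  simp [wordMatrix]

lemma wm_append (u v : List ℤ) : wordMatrix (u ++ v) = wordMatrix u * wordMatrix v := by
  simp [wordMatrix]

lemma wm_flatten_replicate (s : ℕ) (w : List ℤ) :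
    wordMatrix (List.replicate s w).flatten = (wordMatrix w) ^ s := by
  induction s with
  | zero => simp [wm_nil]
  | succ n ih =>
      rw [List.replicate_succ, List.flatten_cons, wm_append, ih, pow_succ']

lemma wm_reverse (w : List ℤ) : wordMatrix w.reverse = (wordMatrix w).transpose := by
  induction w with
  | nil => simp [wm_nil]
  | cons ℓ w ih =>
      rw [List.reverse_cons, wm_append, ih, wm_singleton, wm_cons, Matrix.transpose_mul]
      congr 1
      ext i j
      fin_cases i <;> fin_cases j <;> simp [N]

lemma det_N (ℓ : ℤ) : (N ℓ).det = -1 := by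
  simp [Matrix.det_fin_two, N]

lemma det_wm (w : List ℤ) : (wordMatrix w).det = 1 ∨ (wordMatrix w).det = -1 := by
  induction w with
  | nil => left; simp [wm_nil]
  | cons ℓ w ih =>
      rw [wm_cons, Matrix.det_mul, det_N]
      rcases ih with h | h <;> simp [h]

end Stmt14Aux

namespace Stmt14Aux

lemma N_mul_apply (ℓ : ℤ) (M : Matrix (Fin 2) (Fin 2) ℤ) :
    (N ℓ * M) 0 0 = ℓ * M 0 0 + M 1 0 ∧ (N ℓ * M) 0 1 = ℓ * M 0 1 + M 1 1 ∧
    (N ℓ * M) 1 0 = M 0 0 ∧ (N ℓ * M) 1 1 = M 0 1 := by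
  refine ⟨?_, ?_, ?_, ?_⟩ <;> simp [Matrix.mul_apply, Fin.sum_univ_two, N]

/-- main entry estimates for matrices of nonempty words with letters in `[1,L]` -/
lemma entries (L : ℤ) (w : List ℤ) (hw : w ≠ []) (hl : ∀ ℓ ∈ w, 1 ≤ ℓ ∧ ℓ ≤ L) :
    1 ≤ wordMatrix w 0 0 ∧ 1 ≤ wordMatrix w 0 1 ∧ 1 ≤ wordMatrix w 1 0 ∧
    0 ≤ wordMatrix w 1 1 ∧
    wordMatrix w 0 1 ≤ wordMatrix w 0 0 ∧ wordMatrix w 1 0 ≤ wordMatrix w 0 0 ∧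
    wordMatrix w 1 1 ≤ wordMatrix w 0 1 ∧ wordMatrix w 1 1 ≤ wordMatrix w 1 0 ∧
    wordMatrix w 0 0 ≤ (L + 1) * wordMatrix w 1 0 ∧
    ((wordMatrix w).det = -1 ∨ ((wordMatrix w).det = 1 ∧ 1 ≤ wordMatrix w 1 1)) := by
  induction w with
  | nil => exact absurd rfl hw
  | cons ℓ w ih =>
    have hℓ : 1 ≤ ℓ ∧ ℓ ≤ L := hl ℓ (by simp)
    rcases eq_or_ne w [] with rfl | hw'
    · rw [wm_cons, wm_nil, mul_one]
      have h1 : (N ℓ) 0 0 = ℓ := rfl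
      have h2 : (N ℓ) 0 1 = 1 := rfl
      have h3 : (N ℓ) 1 0 = 1 := rfl
      have h4 : (N ℓ) 1 1 = 0 := rfl
      rw [h1, h2, h3, h4, det_N]
      refine ⟨hℓ.1, le_refl _, le_refl _, le_refl _, hℓ.1, hℓ.1, zero_le_one, zero_le_one,
        ?_, Or.inl rfl⟩
      linarith [hℓ.2]
    · obtain ⟨e1, e2, e3, e4, e5, e6, e7, e8, e9, e10⟩ :=
        ih hw' (fun x hx => hl x (by simp [hx]))
      rw [wm_cons]
      obtain ⟨g1, g2, g3, g4⟩ := N_mul_apply ℓ (wordMatrix w)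
      rw [g1, g2, g3, g4, Matrix.det_mul, det_N]
      have hA1 : 1 ≤ ℓ * wordMatrix w 0 0 + wordMatrix w 1 0 := by nlinarith [hℓ.1]
      refine ⟨hA1, by nlinarith [hℓ.1], e1, le_trans zero_le_one e2, ?_, ?_, ?_, ?_, ?_, ?_⟩
      · nlinarith [hℓ.1]
      · nlinarith [hℓ.1]
      · nlinarith [hℓ.1]
      · exact e5
      · nlinarith [hℓ.1, hℓ.2]
      · rcases e10 with h | h
        · right; rw [h]; exact ⟨by ring, e2⟩
        · left; rw [h.1]; ring

end Stmt14Aux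

namespace Stmt14Aux

lemma entries_B (L : ℤ) (w : List ℤ) (hw : w ≠ []) (hl : ∀ ℓ ∈ w, 1 ≤ ℓ ∧ ℓ ≤ L) :
    wordMatrix w 0 0 ≤ (L + 1) * wordMatrix w 0 1 := by
  have hrev := entries L w.reverse (by simpa using hw)
    (fun x hx => hl x (by simpa using hx))
  rw [wm_reverse w] at hrev
  have h1 : (wordMatrix w).transpose 0 0 = wordMatrix w 0 0 := rfl
  have h2 : (wordMatrix w).transpose 1 0 = wordMatrix w 0 1 := rfl
  rw [h1, h2] at hrev
  exact hrev.2.2.2.2.2.2.2.2.1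

/-- divisibility of all entries -/
def DvdMat (d : ℤ) (X : Matrix (Fin 2) (Fin 2) ℤ) : Prop := ∀ i j, d ∣ X i j

lemma DvdMat.mul_left (d : ℤ) (P X : Matrix (Fin 2) (Fin 2) ℤ) (h : DvdMat d X) :
    DvdMat d (P * X) := by
  intro i j
  rw [Matrix.mul_apply]
  exact Finset.dvd_sum fun k _ => Dvd.dvd.mul_left (h k j) _

lemma DvdMat.mul_right (d : ℤ) (Q X : Matrix (Fin 2) (Fin 2) ℤ) (h : DvdMat d X) :
    DvdMat d (X * Q) := by
  intro i j
  rw [Matrix.mul_apply]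
  exact Finset.dvd_sum fun k _ => Dvd.dvd.mul_right (h i k) _

lemma DvdMat.sub (d : ℤ) {X Y : Matrix (Fin 2) (Fin 2) ℤ} (h : DvdMat d X) (h' : DvdMat d Y) :
    DvdMat d (X - Y) := by
  intro i j
  simpa [Matrix.sub_apply] using dvd_sub (h i j) (h' i j)

/-- conjugation lemma: if `U*N ≡ λ·1 (mod d)` and `det U = ±1` then `d` divides all
entries of the commutator `U*N - N*U`. -/
lemma conj_dvd (d lam : ℤ) (U Nm : Matrix (Fin 2) (Fin 2) ℤ)
    (hdet : U.det = 1 ∨ U.det = -1)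
    (hM : DvdMat d (U * Nm - lam • (1 : Matrix (Fin 2) (Fin 2) ℤ))) :
    DvdMat d (U * Nm - Nm * U) := by
  set F := U * Nm - lam • (1 : Matrix (Fin 2) (Fin 2) ℤ) with hF
  have hUN : U * Nm = lam • (1 : Matrix (Fin 2) (Fin 2) ℤ) + F := by rw [hF]; abel
  set ε := U.det with hε
  -- V * (U*N) * U = ε • (N * U)
  have key : ε • (Nm * U) = lam • (ε • (1 : Matrix (Fin 2) (Fin 2) ℤ)) + U.adjugate * F * U := by
    have h1 : U.adjugate * (U * Nm) * U = (U.adjugate * U) * (Nm * U) := by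
      noncomm_ring
    rw [Matrix.adjugate_mul, Matrix.smul_mul, one_mul] at h1
    calc ε • (Nm * U) = U.adjugate * (U * Nm) * U := h1.symm
      _ = U.adjugate * (lam • (1 : Matrix (Fin 2) (Fin 2) ℤ) + F) * U := by rw [← hUN]
      _ = lam • (U.adjugate * U) + U.adjugate * F * U := by
          rw [Matrix.mul_add, Matrix.add_mul, Matrix.mul_smul, Matrix.smul_mul, mul_one]
      _ = lam • (ε • (1 : Matrix (Fin 2) (Fin 2) ℤ)) + U.adjugate * F * U := by
          rw [Matrix.adjugate_mul]
  have h2 : ε • (U * Nm - Nm * U) = ε • F - U.adjugate * F * U := by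
    rw [smul_sub, key, hUN, smul_add]
    rw [smul_comm]
    abel
  have h3 : DvdMat d (ε • (U * Nm - Nm * U)) := by
    rw [h2]
    exact DvdMat.sub d (fun i j => by
        simpa [Matrix.smul_apply] using Dvd.dvd.mul_left (hM i j) ε)
      (DvdMat.mul_right d U _ (DvdMat.mul_left d U.adjugate F hM))
  intro i j
  have := h3 i j
  rcases hdet with h | h <;> rw [← hε] at * <;> simp [Matrix.smul_apply, h] at this
  · simpa using this
  · simpa using (dvd_neg.2 this)

/-- commutator of consecutive Sturmian matrices -/
lemma comm_lemma (a b : ℤ) (s : ℕ → ℕ) (hs : ∀ k, 1 ≤ s k) (m : ℕ → List ℤ)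
    (hm0 : m 0 = [b]) (hm1 : m 1 = List.replicate (s 1 - 1) b ++ [a])
    (hmr : ∀ k : ℕ, 1 ≤ k →
      m (k + 1) = (List.replicate (s (k + 1)) (m k)).flatten ++ m (k - 1)) :
    ∀ k : ℕ, 1 ≤ k → ∃ G : Matrix (Fin 2) (Fin 2) ℤ,
      wordMatrix (m k) * wordMatrix (m (k - 1)) -
        wordMatrix (m (k - 1)) * wordMatrix (m k) = (a - b) • G ∧
      (G.det = 1 ∨ G.det = -1) := by
  have hNab : N a * N b - N b * N a = (a - b) • !![(0:ℤ), 1; -1, 0] := by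
    rw [Matrix.mul_fin_two, Matrix.mul_fin_two]
    ext i j
    fin_cases i <;> fin_cases j <;> simp [Matrix.smul_apply] <;> ring
  have hdetJ : (!![(0:ℤ), 1; -1, 0]).det = 1 := by simp [Matrix.det_fin_two]
  have detpow : ∀ (X : Matrix (Fin 2) (Fin 2) ℤ) (n : ℕ),
      (X.det = 1 ∨ X.det = -1) → ((X ^ n).det = 1 ∨ (X ^ n).det = -1) := by
    intro X n h
    rw [Matrix.det_pow]
    rcases h with h | h
    · left; rw [h, one_pow]
    · rw [h]
      rcases Nat.even_or_odd n with he | ho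
      · left; exact he.neg_one_pow
      · right; exact ho.neg_one_pow
  intro k hk
  induction k with
  | zero => omega
  | succ k ih =>
    rcases Nat.eq_or_lt_of_le hk with h1 | h2
    · -- k + 1 = 1, base case
      have hk0 : k = 0 := by omega
      subst hk0
      refine ⟨N b ^ (s 1 - 1) * !![(0:ℤ), 1; -1, 0], ?_, ?_⟩
      · rw [hm0, hm1, wm_append, wm_singleton, wm_singleton]
        have hrep : wordMatrix (List.replicate (s 1 - 1) b) = N b ^ (s 1 - 1) := by
          rw [show List.replicate (s 1 - 1) b = (List.replicate (s 1 - 1) [b]).flatten by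
            simp [List.flatten_replicate_singleton], wm_flatten_replicate, wm_singleton]
        rw [hrep]
        have : N b ^ (s 1 - 1) * N a * N b - N b * (N b ^ (s 1 - 1) * N a)
            = N b ^ (s 1 - 1) * (N a * N b - N b * N a) := by
          have hc : N b * N b ^ (s 1 - 1) = N b ^ (s 1 - 1) * N b := by
            rw [← pow_succ', ← pow_succ]
          rw [Matrix.mul_sub]
          rw [← Matrix.mul_assoc, ← Matrix.mul_assoc, hc, Matrix.mul_assoc _ (N b) (N a)]
        rw [this, hNab, Matrix.mul_smul]
      · rw [Matrix.det_mul, hdetJ, mul_one]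
        exact detpow _ _ (det_wm [b] |>.imp (by rw [wm_singleton]; exact id)
          (by rw [wm_singleton]; exact id))
    · -- k ≥ 1
      have hk1 : 1 ≤ k := by omega
      obtain ⟨G, hG, hGdet⟩ := ih hk1
      have hrec := hmr k hk1
      have hwm : wordMatrix (m (k + 1)) = wordMatrix (m k) ^ (s (k + 1)) *
          wordMatrix (m (k - 1)) := by
        rw [hrec, wm_append, wm_flatten_replicate]
      refine ⟨-(wordMatrix (m k) ^ (s (k + 1)) * G), ?_, ?_⟩
      · have h3 : (k + 1 : ℕ) - 1 = k := rfl
        rw [h3, hwm]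
        have : wordMatrix (m k) ^ s (k + 1) * wordMatrix (m (k-1)) * wordMatrix (m k) -
            wordMatrix (m k) * (wordMatrix (m k) ^ s (k + 1) * wordMatrix (m (k-1)))
            = -(wordMatrix (m k) ^ s (k + 1) *
              (wordMatrix (m k) * wordMatrix (m (k-1)) -
               wordMatrix (m (k-1)) * wordMatrix (m k))) := by
          have hc : wordMatrix (m k) * wordMatrix (m k) ^ (s (k+1)) =
              wordMatrix (m k) ^ (s (k+1)) * wordMatrix (m k) := by
            rw [← pow_succ', ← pow_succ]
          rw [Matrix.mul_sub, ← Matrix.mul_assoc, ← Matrix.mul_assoc, hc,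
            Matrix.mul_assoc _ (wordMatrix (m k)) (wordMatrix (m (k-1))),
            Matrix.mul_assoc _ (wordMatrix (m (k-1))) (wordMatrix (m k))]
          abel
        rw [this, hG, Matrix.mul_smul, ← smul_neg]
      · rw [Matrix.det_neg]
        have := detpow (wordMatrix (m k)) (s (k+1)) (det_wm (m k))
        rw [Matrix.det_mul]
        rcases this with h | h <;> rcases hGdet with h' | h' <;>
          simp [h, h', Fintype.card_fin]

lemma dvd_sq_of_dvd_smul (d c : ℤ) (G : Matrix (Fin 2) (Fin 2) ℤ)
    (hdet : G.det = 1 ∨ G.det = -1) (h : DvdMat d (c • G)) : d ∣ c ^ 2 := by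
  have h00 := h 0 0
  have h01 := h 0 1
  have h10 := h 1 0
  have h11 := h 1 1
  simp only [Matrix.smul_apply, smul_eq_mul] at h00 h01 h10 h11
  have hdetc : c ^ 2 * G.det = (c * G 0 0) * (c * G 1 1) - (c * G 0 1) * (c * G 1 0) := by
    rw [Matrix.det_fin_two]; ring
  have : d ∣ c ^ 2 * G.det := by
    rw [hdetc]
    exact dvd_sub (h00.mul_right _) (h01.mul_right _)
  rcases hdet with hd | hd
  · rwa [hd, mul_one] at this
  · rw [hd] at this
    simpa using this.neg_right

lemma key_gcd_dvd (a b : ℤ) (s : ℕ → ℕ) (hs : ∀ k, 1 ≤ s k) (m : ℕ → List ℤ)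
    (hm0 : m 0 = [b]) (hm1 : m 1 = List.replicate (s 1 - 1) b ++ [a])
    (hmr : ∀ k : ℕ, 1 ≤ k →
      m (k + 1) = (List.replicate (s (k + 1)) (m k)).flatten ++ m (k - 1)) (k : ℕ) :
    (Int.gcd (wordMatrix (m k) 0 1)
      (Int.gcd (wordMatrix (m k) 0 0 - wordMatrix (m k) 1 1) (wordMatrix (m k) 1 0)) : ℤ)
      ∣ (a - b) ^ 2 := by
  set M := wordMatrix (m k) with hM
  set d : ℕ := Int.gcd (M 0 1) (Int.gcd (M 0 0 - M 1 1) (M 1 0)) with hd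
  have hdB : (d : ℤ) ∣ M 0 1 := Int.gcd_dvd_left _ _
  have hdAD : (d : ℤ) ∣ M 0 0 - M 1 1 := dvd_trans (Int.gcd_dvd_right _ _) (Int.gcd_dvd_left _ _)
  have hdC : (d : ℤ) ∣ M 1 0 := dvd_trans (Int.gcd_dvd_right _ _) (Int.gcd_dvd_right _ _)
  -- the congruence M ≡ (M 0 0) • 1 mod d
  have hcong : DvdMat (d : ℤ) (M - (M 0 0) • (1 : Matrix (Fin 2) (Fin 2) ℤ)) := by
    intro i j
    fin_cases i <;> fin_cases j <;>
      simp only [Matrix.sub_apply, Matrix.smul_apply, Matrix.one_apply_eq, Matrix.one_apply_ne,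
        smul_eq_mul] <;> simp
    · exact hdB
    · exact hdC
    · exact dvd_sub_comm.mp hdAD
  -- trivial when B = 1 handled by general divisibility of 1; handle k cases
  rcases Nat.eq_zero_or_pos k with rfl | hk
  · have : M 0 1 = 1 := by rw [hM, hm0, wm_singleton]; rfl
    have : d = 1 := by
      rw [hd, this]; simp [Int.gcd]
    rw [this]; exact one_dvd _
  · -- k ≥ 1 : produce U, Nm with M = U * Nm and commutator (a-b) • G
    by_cases htriv : k = 1 ∧ s 1 = 1
    · have hma : m 1 = [a] := by rw [hm1, htriv.2]; simp
      have hB1 : M 0 1 = 1 := by rw [hM, htriv.1, hma, wm_singleton]; rfl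
      have : d = 1 := by rw [hd, hB1]; simp [Int.gcd]
      rw [this]; exact one_dvd _
    have main : ∃ (U Nm G : Matrix (Fin 2) (Fin 2) ℤ), M = U * Nm ∧
        (U.det = 1 ∨ U.det = -1) ∧ (G.det = 1 ∨ G.det = -1) ∧
        U * Nm - Nm * U = (a - b) • G := by
      rcases Nat.lt_or_ge k 2 with hk2 | hk2
      · -- k = 1
        have hk1 : k = 1 := by omega
        subst hk1
        have hs1 : s 1 ≥ 2 := by
          rcases Nat.lt_or_ge (s 1) 2 with h' | h'
          · exact absurd ⟨rfl, le_antisymm (by omega) (hs 1)⟩ htriv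
          · exact h'
        · refine ⟨N b, N b ^ (s 1 - 2) * N a, -(N b ^ (s 1 - 2) * !![(0:ℤ), 1; -1, 0]),
            ?_, ?_, ?_, ?_⟩
          · rw [hM, hm1, wm_append, wm_singleton]
            have hrep : wordMatrix (List.replicate (s 1 - 1) b) = N b ^ (s 1 - 1) := by
              rw [show List.replicate (s 1 - 1) b = (List.replicate (s 1 - 1) [b]).flatten by
                simp [List.flatten_replicate_singleton], wm_flatten_replicate, wm_singleton]
            rw [hrep, show s 1 - 1 = (s 1 - 2) + 1 by omega, pow_succ', Matrix.mul_assoc]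
          · right; exact det_N b
          · rw [Matrix.det_neg, Matrix.det_mul]
            have h1 : (!![(0:ℤ), 1; -1, 0]).det = 1 := by simp [Matrix.det_fin_two]
            rw [h1, mul_one]
            have := (by
              rw [Matrix.det_pow, det_N] :
              (N b ^ (s 1 - 2)).det = (-1 : ℤ) ^ (s 1 - 2))
            rw [this]
            rcases Nat.even_or_odd (s 1 - 2) with he | ho
            · left; simp [Fintype.card_fin, he.neg_one_pow]
            · right; simp [Fintype.card_fin, ho.neg_one_pow]
          · have hNab : N a * N b - N b * N a = (a - b) • !![(0:ℤ), 1; -1, 0] := by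
              rw [Matrix.mul_fin_two, Matrix.mul_fin_two]
              ext i j
              fin_cases i <;> fin_cases j <;> simp [Matrix.smul_apply] <;> ring
            have hc : N b * N b ^ (s 1 - 2) = N b ^ (s 1 - 2) * N b := by
              rw [← pow_succ', ← pow_succ]
            calc N b * (N b ^ (s 1 - 2) * N a) - N b ^ (s 1 - 2) * N a * N b
                = N b ^ (s 1 - 2) * (N b * N a - N a * N b) := by
                  rw [Matrix.mul_sub, ← Matrix.mul_assoc, hc, Matrix.mul_assoc _ (N b) (N a),
                    Matrix.mul_assoc _ (N a) (N b)]
              _ = (a - b) • (-(N b ^ (s 1 - 2) * !![(0:ℤ), 1; -1, 0])) := by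
                  have : N b * N a - N a * N b = -((a-b) • !![(0:ℤ), 1; -1, 0]) := by
                    rw [← hNab]; abel
                  rw [this, Matrix.mul_neg, Matrix.mul_smul, ← smul_neg]
      · -- k ≥ 2, write k = j + 1 with j ≥ 1
        obtain ⟨j, rfl⟩ : ∃ j, k = j + 1 := ⟨k - 1, by omega⟩
        have hj : 1 ≤ j := by omega
        obtain ⟨G, hG, hGdet⟩ := comm_lemma a b s hs m hm0 hm1 hmr j hj
        set W := wordMatrix (m j) with hW
        set W' := wordMatrix (m (j - 1)) with hW'
        have hwm : M = W ^ (s (j + 1)) * W' := by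
          rw [hM, hmr j hj, wm_append, wm_flatten_replicate]
        refine ⟨W, W ^ (s (j+1) - 1) * W', W ^ (s (j+1) - 1) * G, ?_, det_wm (m j), ?_, ?_⟩
        · rw [hwm, ← Matrix.mul_assoc, ← pow_succ', show s (j+1) - 1 + 1 = s (j+1) by
            have := hs (j+1); omega]
        · rw [Matrix.det_mul]
          have hdW : (W ^ (s (j+1) - 1)).det = 1 ∨ (W ^ (s (j+1) - 1)).det = -1 := by
            rw [Matrix.det_pow]
            rcases det_wm (m j) with h | h
            · left; rw [hW, h, one_pow]
            · rw [hW, h]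
              rcases Nat.even_or_odd (s (j+1) - 1) with he | ho
              · left; exact he.neg_one_pow
              · right; exact ho.neg_one_pow
          rcases hdW with h | h <;> rcases hGdet with h' | h' <;> simp [h, h']
        · have hc : W * W ^ (s (j+1) - 1) = W ^ (s (j+1) - 1) * W := by
            rw [← pow_succ', ← pow_succ]
          calc W * (W ^ (s (j+1) - 1) * W') - W ^ (s (j+1) - 1) * W' * W
              = W ^ (s (j+1) - 1) * (W * W' - W' * W) := by
                rw [Matrix.mul_sub, ← Matrix.mul_assoc, hc, Matrix.mul_assoc _ W W',
                  Matrix.mul_assoc _ W' W]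
            _ = (a - b) • (W ^ (s (j+1) - 1) * G) := by
                rw [hG, Matrix.mul_smul]
    obtain ⟨U, Nm, G, hUN, hUdet, hGdet, hcomm⟩ := main
    rw [hUN] at hcong
    have := conj_dvd (d : ℤ) ((U * Nm) 0 0) U Nm hUdet hcong
    rw [hcomm] at this
    exact dvd_sq_of_dvd_smul _ _ G hGdet this

/-- the discriminant is not a perfect square -/
lemma nonsq (A B C D t : ℤ) (hA : 1 ≤ A) (hB : 1 ≤ B) (hC : 1 ≤ C) (hD : 0 ≤ D)
    (hDA : D ≤ A)
    (hdet : A * D - B * C = -1 ∨ (A * D - B * C = 1 ∧ 1 ≤ D))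
    (ht : t ^ 2 = (A - D) ^ 2 + 4 * B * C) : False := by
  set u := |t| with hu
  have hu0 : 0 ≤ u := abs_nonneg t
  have hu2 : u ^ 2 = (A - D) ^ 2 + 4 * B * C := by rw [hu, ← ht]; exact sq_abs t
  rcases hdet with h | ⟨h, hD1⟩
  · -- u^2 = (A+D)^2 + 4
    have he : u ^ 2 = (A + D) ^ 2 + 4 := by nlinarith [hu2]
    have h1 : A + D + 1 ≤ u := by nlinarith
    have h2 : A + D ≤ 1 := by nlinarith
    have h3 : A = 1 ∧ D = 0 := by omega
    have h4 : u ^ 2 = 5 := by rw [he, h3.1, h3.2]; ring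
    have h5 : 2 ≤ u := by nlinarith
    have h6 : u ≤ 2 := by nlinarith
    have : u = 2 := le_antisymm h6 h5
    rw [this] at h4; norm_num at h4
  · -- u^2 = (A+D)^2 - 4
    have he : u ^ 2 = (A + D) ^ 2 - 4 := by nlinarith [hu2]
    have hAD2 : 2 ≤ A * D := by nlinarith
    have hA2 : 2 ≤ A := by nlinarith
    have hT : 3 ≤ A + D := by nlinarith
    have h1 : u ≤ A + D - 1 := by nlinarith
    nlinarith

/-- discriminant is at least `A^2` -/
lemma disc_ge (A B C D : ℤ) (hA : 1 ≤ A) (hB : 1 ≤ B) (hC : 1 ≤ C) (hD : 0 ≤ D)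
    (hDA : D ≤ A)
    (hdet : A * D - B * C = -1 ∨ (A * D - B * C = 1 ∧ 1 ≤ D)) :
    A ^ 2 ≤ (A - D) ^ 2 + 4 * B * C := by
  rcases hdet with h | ⟨h, hD1⟩
  · nlinarith
  · have hAD2 : 2 ≤ A * D := by nlinarith
    have hA2 : 2 ≤ A := by nlinarith
    nlinarith

lemma irrational_of_quadratic (A B C D : ℤ) (hA : 1 ≤ A) (hB : 1 ≤ B) (hC : 1 ≤ C)
    (hD : 0 ≤ D) (hDA : D ≤ A)
    (hdet : A * D - B * C = -1 ∨ (A * D - B * C = 1 ∧ 1 ≤ D))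
    (α : ℝ) (hq : (B : ℝ) * α ^ 2 + ((A : ℝ) - (D : ℝ)) * α - (C : ℝ) = 0) :
    Irrational α := by
  rw [Irrational]
  rintro ⟨q, rfl⟩
  have hQ : (B : ℚ) * q ^ 2 + ((A : ℚ) - (D : ℚ)) * q - (C : ℚ) = 0 := by
    exact_mod_cast hq
  set u : ℤ := q.num with hu
  set v : ℤ := (q.den : ℤ) with hv
  have hv0 : 0 < v := by rw [hv]; exact_mod_cast q.pos
  have huv : (u : ℚ) = q * (v : ℚ) := by
    rw [hu, hv]
    push_cast
    rw [mul_comm]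
    exact_mod_cast (Rat.den_mul_eq_num q).symm
  have hZ : B * u ^ 2 + (A - D) * (u * v) - C * v ^ 2 = 0 := by
    have : (B : ℚ) * (u:ℚ) ^ 2 + ((A:ℚ) - (D:ℚ)) * ((u:ℚ) * (v:ℚ)) - (C:ℚ) * (v:ℚ) ^ 2 = 0 := by
      linear_combination ((B:ℚ) * ((u:ℚ) + q * (v:ℚ)) + ((A:ℚ) - (D:ℚ)) * (v:ℚ)) * huv +
        (v:ℚ) ^ 2 * hQ
    exact_mod_cast this
  set w : ℤ := 2 * B * u + (A - D) * v with hw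
  have hw2 : w ^ 2 = ((A - D) ^ 2 + 4 * B * C) * v ^ 2 := by
    rw [hw]; linear_combination (4 * B) * hZ
  have hvw : v ∣ w := by
    have h2 : v ^ 2 ∣ w ^ 2 := ⟨(A - D) ^ 2 + 4 * B * C, by linarith [hw2]⟩
    exact (Int.pow_dvd_pow_iff two_ne_zero).1 h2
  obtain ⟨t, hvt⟩ := hvw
  rw [hvt] at hw2
  have hdisc : t ^ 2 = (A - D) ^ 2 + 4 * B * C := by
    have h3 : v ^ 2 * t ^ 2 = v ^ 2 * ((A - D) ^ 2 + 4 * B * C) := by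
      linear_combination hw2
    exact (mul_left_cancel₀ (pow_ne_zero 2 hv0.ne') h3)
  exact nonsq A B C D t hA hB hC hD hDA hdet hdisc

lemma div_gcd_dvd (x y p : ℤ) (hx : x ≠ 0) (h : x ∣ p * y) :
    (x / (Int.gcd x y : ℤ)) ∣ p := by
  set g : ℤ := (Int.gcd x y : ℤ) with hg
  have hgpos : 0 < Int.gcd x y := Int.gcd_pos_of_ne_zero_left y hx
  have hgz : g ≠ 0 := by
    rw [hg]
    exact_mod_cast hgpos.ne'
  have hxg : g ∣ x := by rw [hg]; exact Int.gcd_dvd_left _ _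
  have hyg : g ∣ y := by rw [hg]; exact Int.gcd_dvd_right _ _
  have hco : IsCoprime (x / g) (y / g) :=
    Int.isCoprime_iff_gcd_eq_one.2 (Int.gcd_div_gcd_div_gcd hgpos)
  obtain ⟨c, hc⟩ := h
  have hdvd : (x / g) ∣ p * (y / g) := by
    refine ⟨c, ?_⟩
    apply mul_left_cancel₀ hgz
    calc g * (p * (y / g)) = p * (g * (y / g)) := by ring
      _ = p * y := by rw [Int.mul_ediv_cancel' hyg]
      _ = x * c := hc
      _ = (g * (x / g)) * c := by rw [Int.mul_ediv_cancel' hxg]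
      _ = g * (x / g * c) := by ring
  exact hco.dvd_of_dvd_mul_right hdvd

lemma coeff_lower (Bv ADv Cv p E : ℤ) (hE : 0 < E) (hB : 0 < Bv) (hpne : p ≠ 0)
    (hd1 : Bv ∣ p * ADv) (hd2 : Bv ∣ p * Cv)
    (hgcd : ((Int.gcd Bv (Int.gcd ADv Cv : ℤ) : ℕ) : ℤ) ∣ E) :
    Bv ≤ |p| * E := by
  have hbez : Bv ∣ p * (Int.gcd ADv Cv : ℤ) := by
    rw [Int.gcd_eq_gcd_ab ADv Cv]
    have : p * (ADv * ADv.gcdA Cv + Cv * ADv.gcdB Cv) =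
        (p * ADv) * ADv.gcdA Cv + (p * Cv) * ADv.gcdB Cv := by ring
    rw [this]
    exact dvd_add (hd1.mul_right _) (hd2.mul_right _)
  have hdivdvd := div_gcd_dvd Bv (Int.gcd ADv Cv : ℤ) p hB.ne' hbez
  set d : ℕ := Int.gcd Bv ((Int.gcd ADv Cv : ℤ)) with hdd
  have hdE : (d : ℤ) ≤ E := Int.le_of_dvd hE hgcd
  have hdpos : 0 < (d : ℤ) := by
    have : d ≠ 0 := by
      intro h0
      rw [hdd, Int.gcd_eq_zero_iff] at h0
      exact hB.ne' h0.1
    positivity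
  have hddvdB : (d : ℤ) ∣ Bv := by rw [hdd]; exact Int.gcd_dvd_left _ _
  have hBd : Bv / (d:ℤ) * (d:ℤ) = Bv := Int.ediv_mul_cancel hddvdB
  have hple : Bv / (d:ℤ) ≤ |p| := by
    apply Int.le_of_dvd (abs_pos.2 hpne)
    exact (dvd_abs _ _).2 hdivdvd
  calc Bv = Bv / (d:ℤ) * (d:ℤ) := hBd.symm
    _ ≤ |p| * E := by
        apply mul_le_mul hple hdE (le_of_lt hdpos) (abs_nonneg p)

end Stmt14Aux


set_option maxHeartbeats 1000000 in
/-- Lemma 6.1: for the Sturmian words `m_k` on distinct positive integers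
`a ≠ b`, and `α_k = [0; m_k, m_k, ...]`, one has `H(α_k) ≫≪ X_k = H(M_k)`;
moreover the leading coefficient of the minimal integer polynomial of `α_k` is
`≫ X_k` and the Galois conjugate `α'_k` satisfies `|α'_k - α_k| ≫ 1`, with
constants depending only on `a`, `b` and `(sₖ)`. -/
theorem stmt14 (a b : ℤ) (ha : 0 < a) (hb : 0 < b) (hab : a ≠ b)
    (s : ℕ → ℕ) (hs : ∀ k, 1 ≤ s k) (m : ℕ → List ℤ)
    (hm0 : m 0 = [b]) (hm1 : m 1 = List.replicate (s 1 - 1) b ++ [a])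
    (hmr : ∀ k : ℕ, 1 ≤ k →
      m (k + 1) = (List.replicate (s (k + 1)) (m k)).flatten ++ m (k - 1)) :
    ∃ κ₁ κ₂ κ₃ κ₄ : ℝ, 0 < κ₁ ∧ 0 < κ₂ ∧ 0 < κ₃ ∧ 0 < κ₄ ∧
      ∀ k : ℕ, ∀ α : ℝ, IsPurelyPeriodicPt α (wordMatrix (m k)) →
        κ₁ * (matHeightZ (wordMatrix (m k)) : ℝ) ≤ (algHeight α : ℝ) ∧
        (algHeight α : ℝ) ≤ κ₂ * (matHeightZ (wordMatrix (m k)) : ℝ) ∧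
        (∀ P : Polynomial ℤ, Polynomial.aeval α P = 0 →
          P.natDegree = (minpoly ℚ α).natDegree → P.IsPrimitive →
          κ₃ * (matHeightZ (wordMatrix (m k)) : ℝ) ≤ |(P.leadingCoeff : ℝ)|) ∧
        (∀ β : ℝ, Polynomial.aeval β (minpoly ℚ α) = 0 → β ≠ α →
          κ₄ ≤ |β - α|) := by

  classical
  set L : ℤ := max a b with hL
  have hL1 : 1 ≤ L := le_trans ha (le_max_left a b)
  have habne : a - b ≠ 0 := sub_ne_zero.2 hab
  have hab2 : (0:ℤ) < (a - b)^2 := by positivity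
  set K : ℤ := (L + 1) * (a - b)^2 with hK
  have hKpos : (0:ℤ) < K := by positivity
  have hKRpos : (0:ℝ) < (K : ℝ) := by exact_mod_cast hKpos
  refine ⟨((K:ℝ))⁻¹, 1, ((K:ℝ))⁻¹, 1, by positivity, one_pos, by positivity, one_pos, ?_⟩
  -- word facts
  have hword : ∀ k, m k ≠ [] ∧ ∀ ℓ ∈ m k, ℓ = a ∨ ℓ = b := by
    have H : ∀ k, (m k ≠ [] ∧ ∀ ℓ ∈ m k, ℓ = a ∨ ℓ = b) ∧
        (m (k+1) ≠ [] ∧ ∀ ℓ ∈ m (k+1), ℓ = a ∨ ℓ = b) := by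
      intro k
      induction k with
      | zero =>
        constructor
        · rw [hm0]
          exact ⟨by simp, fun ℓ hℓ => by simp at hℓ; right; exact hℓ⟩
        · rw [hm1]
          refine ⟨by simp, fun ℓ hℓ => ?_⟩
          rcases List.mem_append.1 hℓ with h | h
          · right; exact (List.eq_of_mem_replicate h)
          · left; simpa using h
      | succ k ih =>
        refine ⟨ih.2, ?_⟩
        have hrec := hmr (k+1) (by omega)
        simp only [Nat.add_sub_cancel] at hrec
        rw [hrec]
        constructor
        · intro hcon
          exact ih.1.1 (List.append_eq_nil_iff.mp hcon).2
        · intro ℓ hℓ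
          rcases List.mem_append.1 hℓ with h | h
          · obtain ⟨l, hl, hℓl⟩ := List.mem_flatten.1 h
            rw [List.eq_of_mem_replicate hl] at hℓl
            exact ih.2.2 ℓ hℓl
          · exact ih.1.2 ℓ h
    exact fun k => (H k).1
  intro k α hα
  set M := wordMatrix (m k) with hM
  have hl : ∀ ℓ ∈ m k, 1 ≤ ℓ ∧ ℓ ≤ L := by
    intro ℓ hℓ
    rcases (hword k).2 ℓ hℓ with h | h
    · rw [h]; exact ⟨ha, le_max_left a b⟩
    · rw [h]; exact ⟨hb, le_max_right a b⟩
  obtain ⟨e1, e2, e3, e4, e5, e6, e7, e8, e9, e10⟩ :=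
    Stmt14Aux.entries L (m k) (hword k).1 hl
  have eB := Stmt14Aux.entries_B L (m k) (hword k).1 hl
  rw [← hM] at e1 e2 e3 e4 e5 e6 e7 e8 e9 e10 eB
  have hDA : M 1 1 ≤ M 0 0 := le_trans e7 e5
  have hdet2 : M 0 0 * M 1 1 - M 0 1 * M 1 0 = -1 ∨
      (M 0 0 * M 1 1 - M 0 1 * M 1 0 = 1 ∧ 1 ≤ M 1 1) := by
    rw [Matrix.det_fin_two] at e10
    exact e10
  -- note : `nonsq` and friends use A*D - B*C order
  have hdet3 : M 0 0 * M 1 1 - M 0 1 * M 1 0 = -1 ∨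
      (M 0 0 * M 1 1 - M 0 1 * M 1 0 = 1 ∧ 1 ≤ M 1 1) := hdet2
  obtain ⟨hα0, hα1, hαeq⟩ := hα
  have hquad : (M 0 1 : ℝ) * α^2 + ((M 0 0 : ℝ) - (M 1 1 : ℝ)) * α - (M 1 0 : ℝ) = 0 := by
    linear_combination hαeq
  have hirr : Irrational α :=
    Stmt14Aux.irrational_of_quadratic (M 0 0) (M 0 1) (M 1 0) (M 1 1)
      e1 e2 e3 e4 hDA hdet3 α hquad
  -- the integer quadratic polynomial
  set P₀ : Polynomial ℤ := Polynomial.C (M 0 1) * Polynomial.X^2 +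
      Polynomial.C (M 0 0 - M 1 1) * Polynomial.X + Polynomial.C (-(M 1 0)) with hP₀
  have hB0 : M 0 1 ≠ 0 := by omega
  have hP₀deg : P₀.natDegree = 2 := Polynomial.natDegree_quadratic hB0
  have hP₀ne : P₀ ≠ 0 := fun h => by simp [h] at hP₀deg
  have hP₀aev : Polynomial.aeval α P₀ = 0 := by
    rw [hP₀]
    simp only [map_add, map_mul, Polynomial.aeval_C, Polynomial.aeval_X, map_pow]
    simp only [eq_intCast]
    push_cast
    linear_combination hquad
  -- rational monic quadratic
  set Q₀ : Polynomial ℚ := Polynomial.C ((M 0 1 : ℚ)) * Polynomial.X^2 +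
      Polynomial.C ((M 0 0 : ℚ) - (M 1 1 : ℚ)) * Polynomial.X +
      Polynomial.C (-(M 1 0 : ℚ)) with hQ₀
  have hBQ : ((M 0 1 : ℚ)) ≠ 0 := by exact_mod_cast hB0
  have hQ₀deg : Q₀.natDegree = 2 := Polynomial.natDegree_quadratic hBQ
  have hQ₀ne : Q₀ ≠ 0 := fun h => by simp [h] at hQ₀deg
  have hQ₀aev : Polynomial.aeval α Q₀ = 0 := by
    rw [hQ₀]
    simp only [map_add, map_mul, Polynomial.aeval_C, Polynomial.aeval_X, map_pow]
    simp only [eq_ratCast]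
    push_cast
    linear_combination hquad
  have hint : IsIntegral ℚ α := (IsAlgebraic.isIntegral ⟨Q₀, hQ₀ne, hQ₀aev⟩)
  have hdvdQ : minpoly ℚ α ∣ Q₀ := minpoly.dvd ℚ α hQ₀aev
  have hdeg : (minpoly ℚ α).natDegree = 2 := by
    have hle : (minpoly ℚ α).natDegree ≤ 2 := by
      rw [← hQ₀deg]
      exact Polynomial.natDegree_le_of_dvd hdvdQ hQ₀ne
    have hpos : 0 < (minpoly ℚ α).natDegree := minpoly.natDegree_pos hint
    rcases Nat.lt_or_ge (minpoly ℚ α).natDegree 2 with h | h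
    · exfalso
      have h1 : (minpoly ℚ α).natDegree = 1 := by omega
      have hmo := minpoly.monic hint
      have heq := Polynomial.eq_X_add_C_of_natDegree_le_one (le_of_eq h1)
      have hc1 : (minpoly ℚ α).coeff 1 = 1 := by
        have := hmo.leadingCoeff
        rwa [Polynomial.leadingCoeff, h1] at this
      rw [hc1, map_one, one_mul] at heq
      have haev := minpoly.aeval ℚ α
      rw [heq] at haev
      simp only [map_add, Polynomial.aeval_X, Polynomial.aeval_C] at haev
      rw [eq_ratCast] at haev
      exact hirr ⟨-((minpoly ℚ α).coeff 0), by push_cast; linarith⟩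
    · omega
  -- matHeightZ = A
  have hXnat : matHeightZ M = (M 0 0).natAbs := by
    simp only [matHeightZ]
    omega
  have hXreal : ((matHeightZ M : ℕ) : ℝ) = ((M 0 0 : ℤ) : ℝ) := by
    rw [hXnat, Nat.cast_natAbs]
    have h00 : (0:ℤ) ≤ M 0 0 := by omega
    rw [abs_of_nonneg h00]
  -- polyHeight of P₀
  have hcoeff2 : P₀.coeff 2 = M 0 1 := by
    rw [hP₀]
    simp only [Polynomial.coeff_add, Polynomial.coeff_C_mul, Polynomial.coeff_X_pow,
      Polynomial.coeff_C, Polynomial.coeff_X]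
    norm_num
  have hcoeff1 : P₀.coeff 1 = M 0 0 - M 1 1 := by
    rw [hP₀]
    simp only [Polynomial.coeff_add, Polynomial.coeff_C_mul, Polynomial.coeff_X_pow,
      Polynomial.coeff_C, Polynomial.coeff_X]
    norm_num
  have hcoeff0 : P₀.coeff 0 = -(M 1 0) := by
    rw [hP₀]
    simp only [Polynomial.coeff_add, Polynomial.coeff_C_mul, Polynomial.coeff_X_pow,
      Polynomial.coeff_C, Polynomial.coeff_X]
    norm_num
  have hheight₀ : polyHeight P₀ ≤ (M 0 0).natAbs := by
    apply Finset.sup_le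
    intro i hi
    have hi2 : i ≤ 2 := by
      have := Polynomial.le_natDegree_of_mem_supp i hi
      omega
    interval_cases i
    · rw [hcoeff0]; omega
    · rw [hcoeff1]; omega
    · rw [hcoeff2]; omega
  have hmem₀ : polyHeight P₀ ∈ {h : ℕ | ∃ P : Polynomial ℤ, P ≠ 0 ∧
      Polynomial.aeval α P = 0 ∧ P.natDegree = (minpoly ℚ α).natDegree ∧ polyHeight P = h} :=
    ⟨P₀, hP₀ne, hP₀aev, by rw [hP₀deg, hdeg], rfl⟩
  have hupper : algHeight α ≤ (M 0 0).natAbs :=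
    le_trans (Nat.sInf_le hmem₀) hheight₀
  -- key lower bound on the leading coefficient of any degree-2 vanishing polynomial
  have hcoefflb : ∀ P : Polynomial ℤ, P ≠ 0 → Polynomial.aeval α P = 0 →
      P.natDegree = 2 → M 0 0 ≤ K * |P.coeff 2| := by
    intro P hPne hPaev hPdeg
    set p := P.coeff 2 with hp
    set q := P.coeff 1 with hq
    set r := P.coeff 0 with hr
    have hpne : p ≠ 0 := by
      have := Polynomial.leadingCoeff_ne_zero.2 hPne
      rwa [Polynomial.leadingCoeff, hPdeg] at this
    have haevP : (p : ℝ) * α^2 + (q : ℝ) * α + (r : ℝ) = 0 := by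
      have := Polynomial.aeval_eq_sum_range (p := P) α
      rw [hPdeg] at this
      rw [hPaev] at this
      simp only [Finset.sum_range_succ, Finset.sum_range_zero, zero_add, pow_zero, pow_one,
        zsmul_eq_mul, mul_one] at this
      linarith [this]
    have hlin : ((q * M 0 1 - p * (M 0 0 - M 1 1) : ℤ) : ℝ) * α +
        ((p * M 1 0 + r * M 0 1 : ℤ) : ℝ) = 0 := by
      push_cast
      linear_combination (M 0 1 : ℝ) * haevP - (p : ℝ) * hquad
    have hx : q * M 0 1 - p * (M 0 0 - M 1 1) = 0 := by
      by_contra hxne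
      apply hirr
      refine ⟨(-(p * M 1 0 + r * M 0 1 : ℤ) : ℚ) / ((q * M 0 1 - p * (M 0 0 - M 1 1) : ℤ) : ℚ), ?_⟩
      have hxR : ((q * M 0 1 - p * (M 0 0 - M 1 1) : ℤ) : ℝ) ≠ 0 := by
        exact_mod_cast hxne
      push_cast
      rw [div_eq_iff (by exact_mod_cast hxne)]
      push_cast at hlin
      linarith
    have hy : p * M 1 0 + r * M 0 1 = 0 := by
      have : ((p * M 1 0 + r * M 0 1 : ℤ) : ℝ) = 0 := by
        rw [hx] at hlin
        push_cast at hlin ⊢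
        linarith
      exact_mod_cast this
    have hd1 : (M 0 1) ∣ p * (M 0 0 - M 1 1) := ⟨q, by linarith [hx]⟩
    have hd2 : (M 0 1) ∣ p * (M 1 0) := ⟨-r, by linarith [hy]⟩
    have hdk := Stmt14Aux.key_gcd_dvd a b s hs m hm0 hm1 hmr k
    rw [← hM] at hdk
    have hBle : M 0 1 ≤ |p| * (a - b)^2 :=
      Stmt14Aux.coeff_lower (M 0 1) (M 0 0 - M 1 1) (M 1 0) p ((a-b)^2) hab2
        (by omega) hpne hd1 hd2 hdk
    calc M 0 0 ≤ (L + 1) * M 0 1 := eB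
      _ ≤ (L + 1) * (|p| * (a - b)^2) := by
          apply mul_le_mul_of_nonneg_left hBle (by linarith)
      _ = K * |p| := by rw [hK]; ring
  -- conclusion, four bullets
  refine ⟨?_, ?_, ?_, ?_⟩
  · -- lower bound for the height
    have hne : {h : ℕ | ∃ P : Polynomial ℤ, P ≠ 0 ∧ Polynomial.aeval α P = 0 ∧
        P.natDegree = (minpoly ℚ α).natDegree ∧ polyHeight P = h}.Nonempty :=
      ⟨polyHeight P₀, hmem₀⟩
    obtain ⟨P, hPne, hPaev, hPdeg, hPh⟩ := Nat.sInf_mem hne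
    have hlb := hcoefflb P hPne hPaev (by rw [hPdeg, hdeg])
    have hpne2 : P.coeff 2 ≠ 0 := by
      have := Polynomial.leadingCoeff_ne_zero.2 hPne
      rwa [Polynomial.leadingCoeff, hPdeg, hdeg] at this
    have hsupp : (2:ℕ) ∈ P.support := Polynomial.mem_support_iff.2 hpne2
    have hple : (P.coeff 2).natAbs ≤ polyHeight P :=
      Finset.le_sup (f := fun i => (P.coeff i).natAbs) hsupp
    have hZ : M 0 0 ≤ K * (algHeight α : ℤ) := by
      have h1 : |P.coeff 2| ≤ (algHeight α : ℤ) := by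
        have h2 : (algHeight α : ℤ) = (polyHeight P : ℤ) := by
          rw [algHeight, hPh]
        rw [h2, Int.abs_eq_natAbs]
        exact_mod_cast hple
      calc M 0 0 ≤ K * |P.coeff 2| := hlb
        _ ≤ K * (algHeight α : ℤ) := mul_le_mul_of_nonneg_left h1 hKpos.le
    rw [inv_mul_le_iff₀ hKRpos, hXreal]
    exact_mod_cast hZ
  · -- upper bound for the height
    have h1 : algHeight α ≤ matHeightZ M := by
      rw [hXnat]
      exact hupper
    rw [one_mul]
    exact_mod_cast h1
  · -- leading coefficient bound
    intro P hPaev hPdeg hPprim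
    have hPne : P ≠ 0 := by
      intro h0
      have := hPprim 2 (by rw [h0]; exact dvd_zero _)
      norm_num [Int.isUnit_iff] at this
    have hlb := hcoefflb P hPne hPaev (by rw [hPdeg, hdeg])
    have hlc : P.leadingCoeff = P.coeff 2 := by
      rw [Polynomial.leadingCoeff, hPdeg, hdeg]
    rw [inv_mul_le_iff₀ hKRpos, hXreal, hlc]
    have : ((M 0 0 : ℤ) : ℝ) ≤ ((K * |P.coeff 2| : ℤ) : ℝ) := by exact_mod_cast hlb
    calc ((M 0 0 : ℤ) : ℝ) ≤ ((K * |P.coeff 2| : ℤ) : ℝ) := this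
      _ = (K : ℝ) * |((P.coeff 2 : ℤ) : ℝ)| := by push_cast; ring
  · -- separation of conjugates
    intro β hβaev hβne
    obtain ⟨c, hc⟩ := hdvdQ
    have hβQ : Polynomial.aeval β Q₀ = 0 := by
      rw [hc, map_mul, hβaev, zero_mul]
    have hquadβ : (M 0 1 : ℝ) * β^2 + ((M 0 0 : ℝ) - (M 1 1 : ℝ)) * β - (M 1 0 : ℝ) = 0 := by
      rw [hQ₀] at hβQ
      simp only [map_add, map_mul, Polynomial.aeval_C, Polynomial.aeval_X, map_pow] at hβQ
      rw [eq_ratCast, eq_ratCast, eq_ratCast] at hβQ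
      push_cast at hβQ
      linear_combination hβQ
    have hBR : (0:ℝ) < (M 0 1 : ℝ) := by exact_mod_cast (by omega : (0:ℤ) < M 0 1)
    have hCR : (0:ℝ) < (M 1 0 : ℝ) := by exact_mod_cast (by omega : (0:ℤ) < M 1 0)
    have hfac : (α - β) * ((M 0 1 : ℝ) * (α + β) + ((M 0 0 : ℝ) - (M 1 1 : ℝ))) = 0 := by
      linear_combination hquad - hquadβ
    have hsum : (M 0 1 : ℝ) * (α + β) + ((M 0 0 : ℝ) - (M 1 1 : ℝ)) = 0 := by
      rcases mul_eq_zero.1 hfac with h | h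
      · exact absurd (by linarith : β = α) hβne
      · exact h
    have hsv2 : (2 * (M 0 1 : ℝ) * α + ((M 0 0 : ℝ) - (M 1 1 : ℝ)))^2 =
        ((M 0 0 : ℝ) - (M 1 1 : ℝ))^2 + 4 * (M 0 1 : ℝ) * (M 1 0 : ℝ) := by
      linear_combination (4 * (M 0 1 : ℝ)) * hquad
    have h1 : 0 < (M 0 1 : ℝ) * α + ((M 0 0 : ℝ) - (M 1 1 : ℝ)) := by
      nlinarith [hquad, hα0, hCR]
    have hsvpos : 0 < 2 * (M 0 1 : ℝ) * α + ((M 0 0 : ℝ) - (M 1 1 : ℝ)) := by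
      nlinarith [hα0, hBR]
    have hdiscA : ((M 0 0 : ℝ))^2 ≤ ((M 0 0 : ℝ) - (M 1 1 : ℝ))^2 +
        4 * (M 0 1 : ℝ) * (M 1 0 : ℝ) := by
      have := Stmt14Aux.disc_ge (M 0 0) (M 0 1) (M 1 0) (M 1 1) e1 e2 e3 e4 hDA hdet3
      exact_mod_cast this
    have hAB : (M 0 1 : ℝ) ≤ (M 0 0 : ℝ) := by exact_mod_cast e5
    have hA0 : (0:ℝ) < (M 0 0 : ℝ) := by exact_mod_cast (by omega : (0:ℤ) < M 0 0)
    have hsvB : (M 0 1 : ℝ) ≤ 2 * (M 0 1 : ℝ) * α + ((M 0 0 : ℝ) - (M 1 1 : ℝ)) := by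
      nlinarith [hsv2, hdiscA, hsvpos, hBR, hAB, hA0]
    have hBab : (M 0 1 : ℝ) * (α - β) = 2 * (M 0 1 : ℝ) * α + ((M 0 0 : ℝ) - (M 1 1 : ℝ)) := by
      linarith [hsum]
    have hfin : 1 ≤ α - β := by nlinarith [hBab, hsvB, hBR]
    calc (1:ℝ) ≤ α - β := hfin
      _ ≤ |α - β| := le_abs_self _
      _ = |β - α| := abs_sub_comm α β
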